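/- Let F be a null 2-form on Minkowski space, i.e., F ≠ 0, (F,F) = 0 and (*F,F) = 0. Then there exists a future-pointing null vector ℓ ≠ 0 such that F(ℓ) = 0 and (*F)(ℓ) = 0; moreover, every vector v satisfying F(v) = 0 and (*F)(v) = 0 is a scalar multiple of ℓ. -/

import Mathlib

open Matrix BigOperators

noncomputable section

/-- Minkowski space: ℝ⁴. -/
abbrev V4 : Type := Fin 4 → ℝ

/-- The signature signs of η = diag(−1,1,1,1). -/
def etaSgn (i : Fin 4) : ℝ := if i = 0 then -1 else 1

/-- The Lorentzian bilinear form η(x,y) = −x⁰y⁰ + x¹y¹ + x²y² + x³y³. -/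
def etaB (x y : V4) : ℝ := ∑ i, etaSgn i * x i * y i

/-- Action of a 2-form on a vector: F(x)^α = η^{αμ} F_{μν} x^ν. -/
def act (F : Matrix (Fin 4) (Fin 4) ℝ) (x : V4) : V4 :=
  fun a => etaSgn a * ∑ b, F a b * x b

/-- The product of 2-forms: (F,G) = ½ F_{αβ} G^{αβ}. -/
def formInner (F G : Matrix (Fin 4) (Fin 4) ℝ) : ℝ :=
  (1 / 2) * ∑ a, ∑ b, etaSgn a * etaSgn b * F a b * G a b

/-- The Levi-Civita symbol on four indices, with ε₀₁₂₃ = 1. -/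
def eps (a b c d : Fin 4) : ℝ :=
  Matrix.det (Matrix.of fun i j => if ![a, b, c, d] i = j then (1 : ℝ) else 0)

/-- The Hodge dual: (*F)_{αβ} = ½ ε_{αβμν} F^{μν}. -/
def hodge (F : Matrix (Fin 4) (Fin 4) ℝ) : Matrix (Fin 4) (Fin 4) ℝ :=
  Matrix.of fun a b => (1 / 2) * ∑ m, ∑ n, eps a b m n * (etaSgn m * etaSgn n * F m n)

/-- Exterior product of vectors: (u∧v)_{αβ} = u_α v_β − u_β v_α, with indices lowered by η. -/
def wedge (u v : V4) : Matrix (Fin 4) (Fin 4) ℝ :=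
  Matrix.of fun a b => (etaSgn a * u a) * (etaSgn b * v b) - (etaSgn b * u b) * (etaSgn a * v a)

/-- A null 2-form: a nonzero antisymmetric matrix F with (F,F) = 0 and (*F,F) = 0. -/
def IsNullForm (F : Matrix (Fin 4) (Fin 4) ℝ) : Prop :=
  Fᵀ = -F ∧ F ≠ 0 ∧ formInner F F = 0 ∧ formInner (hodge F) F = 0

/-- A t-volume: an antisymmetric matrix U with (U,U) = −1 and (*U,U) = 0. -/
def IsTVolume (U : Matrix (Fin 4) (Fin 4) ℝ) : Prop :=
  Uᵀ = -U ∧ formInner U U = -1 ∧ formInner (hodge U) U = 0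

/-- Auxiliary: the generic antisymmetric matrix built from fields E, B. -/
def MF (e1 e2 e3 b1 b2 b3 : ℝ) : Matrix (Fin 4) (Fin 4) ℝ :=
  !![0, e1, e2, e3; -e1, 0, b3, -b2; -e2, -b3, 0, b1; -e3, b2, -b1, 0]

set_option maxHeartbeats 4000000 in
lemma hodge_MF (e1 e2 e3 b1 b2 b3 : ℝ) :
    hodge (MF e1 e2 e3 b1 b2 b3) = MF b1 b2 b3 (-e1) (-e2) (-e3) := by
  funext a b
  fin_cases a <;> fin_cases b <;>
    · simp (config := {decide := true}) [hodge, MF, eps, etaSgn, Fin.sum_univ_four, Matrix.det_succ_row_zero,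
        Fin.sum_univ_succ]
      try ring

lemma decompMF (F : Matrix (Fin 4) (Fin 4) ℝ) (hA : Fᵀ = -F) :
    F = MF (F 0 1) (F 0 2) (F 0 3) (F 2 3) (F 3 1) (F 1 2) := by
  have hs : ∀ a b, F b a = -F a b := fun a b => by
    simpa using congrFun (congrFun hA a) b
  funext a b
  fin_cases a <;> fin_cases b <;> simp [MF] <;>
    first
      | rfl
      | exact hs _ _
      | linarith [hs 0 0, hs 1 1, hs 2 2, hs 3 3]

lemma formInner_MF (e1 e2 e3 b1 b2 b3 c1 c2 c3 d1 d2 d3 : ℝ) :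
    formInner (MF e1 e2 e3 b1 b2 b3) (MF c1 c2 c3 d1 d2 d3) =
      (b1*d1+b2*d2+b3*d3) - (e1*c1+e2*c2+e3*c3) := by
  simp [formInner, MF, etaSgn, Fin.sum_univ_four]
  ring

set_option maxHeartbeats 1600000

/-- A null 2-form admits a future-pointing null vector ℓ ≠ 0 annihilated
by F and *F, and every common annihilator of F and *F is a multiple of ℓ. -/
theorem nullForm_fundamental_direction (F : Matrix (Fin 4) (Fin 4) ℝ)
    (hF : IsNullForm F) :
    ∃ ℓ : V4, ℓ ≠ 0 ∧ etaB ℓ ℓ = 0 ∧ 0 < ℓ 0 ∧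
      act F ℓ = 0 ∧ act (hodge F) ℓ = 0 ∧
      ∀ v : V4, act F v = 0 → act (hodge F) v = 0 → ∃ c : ℝ, v = c • ℓ := by
  obtain ⟨hA, hne, h1, h2⟩ := hF
  obtain ⟨e1, e2, e3, b1, b2, b3, rfl⟩ :
      ∃ e1 e2 e3 b1 b2 b3, F = MF e1 e2 e3 b1 b2 b3 :=
    ⟨_, _, _, _, _, _, decompMF F hA⟩
  rw [formInner_MF] at h1
  rw [hodge_MF, formInner_MF] at h2
  have hsq : b1^2+b2^2+b3^2 = e1^2+e2^2+e3^2 := by nlinarith [h1]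
  have heb : e1*b1+e2*b2+e3*b3 = 0 := by nlinarith [h2]
  have hepos : 0 < e1^2+e2^2+e3^2 := by
    rcases lt_or_ge 0 (e1^2+e2^2+e3^2) with h | h
    · exact h
    · exfalso
      apply hne
      have he1 : e1 = 0 := by nlinarith
      have he2 : e2 = 0 := by nlinarith
      have he3 : e3 = 0 := by nlinarith
      have hb1 : b1 = 0 := by nlinarith
      have hb2 : b2 = 0 := by nlinarith
      have hb3 : b3 = 0 := by nlinarith
      subst he1 he2 he3 hb1 hb2 hb3
      funext a b
      fin_cases a <;> fin_cases b <;>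
        norm_num [MF, Matrix.vecHead, Matrix.vecTail]
  refine ⟨![e1^2+e2^2+e3^2, b2*e3 - b3*e2, b3*e1 - b1*e3, b1*e2 - b2*e1],
    ?_, ?_, ?_, ?_, ?_, ?_⟩
  · intro h
    have h0 := congrFun h 0
    simp at h0
    exact hepos.ne' h0
  · simp [etaB, etaSgn, Fin.sum_univ_four]
    linear_combination (e1^2+e2^2+e3^2) * hsq - (e1*b1+e2*b2+e3*b3) * heb
  · simpa using hepos
  · funext a
    fin_cases a
    · simp [act, MF, etaSgn, Fin.sum_univ_four]; ring
    · simp [act, MF, etaSgn, Fin.sum_univ_four]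
      linear_combination e1*hsq - b1*heb
    · simp [act, MF, etaSgn, Fin.sum_univ_four]
      linear_combination e2*hsq - b2*heb
    · simp [act, MF, etaSgn, Fin.sum_univ_four]
      linear_combination e3*hsq - b3*heb
  · rw [hodge_MF]
    funext a
    fin_cases a
    · simp [act, MF, etaSgn, Fin.sum_univ_four]; ring
    · simp [act, MF, etaSgn, Fin.sum_univ_four]
      linear_combination (-e1)*heb
    · simp [act, MF, etaSgn, Fin.sum_univ_four]
      linear_combination (-e2)*heb
    · simp [act, MF, etaSgn, Fin.sum_univ_four]
      linear_combination (-e3)*heb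
  · intro v hFv hHv
    rw [hodge_MF] at hHv
    have H0 : e1 * v 1 + e2 * v 2 + e3 * v 3 = 0 := by
      have h := congrFun hFv 0
      simp [act, MF, etaSgn, Fin.sum_univ_four] at h
      first | linarith | linear_combination h | linear_combination -h
    have HA : -(e1 * v 0) + b3 * v 2 - b2 * v 3 = 0 := by
      have h := congrFun hFv 1
      simp [act, MF, etaSgn, Fin.sum_univ_four] at h
      first | linarith | linear_combination h | linear_combination -h
    have HB : -(e2 * v 0) - b3 * v 1 + b1 * v 3 = 0 := by
      have h := congrFun hFv 2
      simp [act, MF, etaSgn, Fin.sum_univ_four] at h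
      first | linarith | linear_combination h | linear_combination -h
    have HC : -(e3 * v 0) + b2 * v 1 - b1 * v 2 = 0 := by
      have h := congrFun hFv 3
      simp [act, MF, etaSgn, Fin.sum_univ_four] at h
      first | linarith | linear_combination h | linear_combination -h
    have K0 : b1 * v 1 + b2 * v 2 + b3 * v 3 = 0 := by
      have h := congrFun hHv 0
      simp [act, MF, etaSgn, Fin.sum_univ_four] at h
      first | linarith | linear_combination h | linear_combination -h
    have hpne : ((e1^2+e2^2+e3^2)^2 : ℝ) ≠ 0 := pow_ne_zero 2 hepos.ne'
    set C : ℝ := (v 1 * (b2*e3 - b3*e2) + v 2 * (b3*e1 - b1*e3) + v 3 * (b1*e2 - b2*e1))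
        / (e1^2+e2^2+e3^2)^2 with hC
    have comp0 : v 0 = C * (e1^2+e2^2+e3^2) := by
      rw [hC, div_mul_eq_mul_div, eq_div_iff hpne]
      linear_combination (-(e1^2+e2^2+e3^2)) * (e1*HA + e2*HB + e3*HC)
    have comp1 : v 1 = C * (b2*e3 - b3*e2) := by
      rw [hC, div_mul_eq_mul_div, eq_div_iff hpne]
      linear_combination (-(v 1)*(e1^2+e2^2+e3^2))*hsq
        + (v 1)*(e1*b1+e2*b2+e3*b3)*heb
        + ((b3*e1-b1*e3)*b3 - (b1*e2-b2*e1)*b2)*H0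
        - ((b3*e1-b1*e3)*e3 - (b1*e2-b2*e1)*e2)*K0
    have comp2 : v 2 = C * (b3*e1 - b1*e3) := by
      rw [hC, div_mul_eq_mul_div, eq_div_iff hpne]
      linear_combination (-(v 2)*(e1^2+e2^2+e3^2))*hsq
        + (v 2)*(e1*b1+e2*b2+e3*b3)*heb
        + ((b1*e2-b2*e1)*b1 - (b2*e3-b3*e2)*b3)*H0
        - ((b1*e2-b2*e1)*e1 - (b2*e3-b3*e2)*e3)*K0
    have comp3 : v 3 = C * (b1*e2 - b2*e1) := by
      rw [hC, div_mul_eq_mul_div, eq_div_iff hpne]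
      linear_combination (-(v 3)*(e1^2+e2^2+e3^2))*hsq
        + (v 3)*(e1*b1+e2*b2+e3*b3)*heb
        + ((b2*e3-b3*e2)*b2 - (b3*e1-b1*e3)*b1)*H0
        - ((b2*e3-b3*e2)*e2 - (b3*e1-b1*e3)*e1)*K0
    refine ⟨C, ?_⟩
    funext a
    fin_cases a
    · exact comp0
    · exact comp1
    · exact comp2
    · exact comp3

end
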